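/- Let C be a symmetric block tridiagonal matrix with diagonal blocks C_k + H_k and off-diagonal blocks A_k, where C_k = (g_{k+1}')ᵀQ_{k+1}⁻¹g_{k+1}' + Q_k⁻¹ (with Q_{N+1} = I and g_{N+1}' = 0), A_k = −Q_k⁻¹g_k', and H_k symmetric positive semidefinite. Then C = GᵀQ⁻¹G + diag(H_k), where G is the block bidiagonal matrix with identity diagonal and subdiagonal blocks −g_k', and Q = diag(Q_k); hence C is symmetric positive definite. -/

import Mathlib

open Matrix

/-- The block tridiagonal Gauss-Newton matrix C equals GᵀQ⁻¹G + diag(H_k),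
hence is symmetric positive definite. Indices are 0-based; the conventions
Q_{N+1} = I and g'_{N+1} = 0 of the paper become Q N = 1 and g' N = 0. -/
theorem block_tridiagonal_decomposition_posdef
    (N n : ℕ)
    (Q : ℕ → Matrix (Fin n) (Fin n) ℝ) (hQ : ∀ k, k ≤ N → (Q k).PosDef)
    (hQN : Q N = 1)
    (g' : ℕ → Matrix (Fin n) (Fin n) ℝ) (hg'N : g' N = 0)
    (H : Fin N → Matrix (Fin n) (Fin n) ℝ) (hH : ∀ k, (H k).PosSemidef)
    (C G Qd Hd : Matrix (Fin N × Fin n) (Fin N × Fin n) ℝ)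
    (hC : ∀ p q : Fin N × Fin n, C p q =
      if p.1 = q.1 then
        ((g' ((p.1 : ℕ) + 1))ᵀ * (Q ((p.1 : ℕ) + 1))⁻¹ * g' ((p.1 : ℕ) + 1)
          + (Q (p.1 : ℕ))⁻¹ + H p.1) p.2 q.2
      else if (p.1 : ℕ) = (q.1 : ℕ) + 1 then
        (-((Q (p.1 : ℕ))⁻¹ * g' (p.1 : ℕ))) p.2 q.2
      else if (q.1 : ℕ) = (p.1 : ℕ) + 1 then
        (-((g' (q.1 : ℕ))ᵀ * (Q (q.1 : ℕ))⁻¹)) p.2 q.2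
      else 0)
    (hG : ∀ p q : Fin N × Fin n, G p q =
      if p.1 = q.1 then (if p.2 = q.2 then (1 : ℝ) else 0)
      else if (p.1 : ℕ) = (q.1 : ℕ) + 1 then -(g' (p.1 : ℕ) p.2 q.2)
      else 0)
    (hQd : ∀ p q : Fin N × Fin n, Qd p q =
      if p.1 = q.1 then (Q (p.1 : ℕ))⁻¹ p.2 q.2 else 0)
    (hHd : ∀ p q : Fin N × Fin n, Hd p q =
      if p.1 = q.1 then H p.1 p.2 q.2 else 0) :
    C = Gᵀ * Qd * G + Hd ∧ C.PosDef := by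
  have lemA : ∀ (c : ℕ), c ≤ N → ∀ f : ℕ → ℝ, f N = 0 →
      (∑ k : Fin N, if (k:ℕ) = c then f c else 0) = f c := by
    intro c hc f hf
    rcases lt_or_eq_of_le hc with h | h
    · rw [Finset.sum_eq_single_of_mem (⟨c, h⟩ : Fin N) (Finset.mem_univ _)]
      · simp
      · intro k _ hk
        have : (k:ℕ) ≠ c := fun hkc => hk (Fin.ext hkc)
        simp [this]
    · subst h
      rw [Finset.sum_eq_zero, hf]
      intro k _
      have hk : ¬((k:ℕ) = c) := by omega
      simp [hk]
  have lemB : ∀ (c : ℕ) (mm : Fin N) (g : Fin N → ℝ),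
      (∑ x : Fin N, if (x:ℕ) = c then -(if x = mm then g x else 0) else 0)
        = if (mm:ℕ) = c then -(g mm) else 0 := by
    intro c mm g
    have h : ∀ x : Fin N, (if (x:ℕ) = c then -(if x = mm then g x else 0) else 0)
        = (if x = mm then (if (mm:ℕ) = c then -g mm else 0) else 0) := by
      intro x
      by_cases hx : x = mm
      · subst hx; by_cases hc : (x:ℕ) = c <;> simp [hc]
      · simp [hx]
    simp [h]
  have hmain : ∀ (m l : Fin N) (a b : Fin n), (Gᵀ * Qd * G) (m,a) (l,b) =
      (if m = l then ((g' ((m:ℕ)+1))ᵀ * (Q ((m:ℕ)+1))⁻¹ * g' ((m:ℕ)+1) + (Q (m:ℕ))⁻¹) a b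
       else if (m:ℕ) = (l:ℕ)+1 then (-((Q (m:ℕ))⁻¹ * g' (m:ℕ))) a b
       else if (l:ℕ) = (m:ℕ)+1 then (-((g' (l:ℕ))ᵀ * (Q (l:ℕ))⁻¹)) a b
       else 0) := by
    intro m l a b
    have hGsplit : ∀ (k mm : Fin N) (i aa : Fin n), G (k,i) (mm,aa) =
        (if k = mm then (if i = aa then (1:ℝ) else 0) else 0)
          + (if (k:ℕ) = (mm:ℕ)+1 then -(g' (k:ℕ) i aa) else 0) := by
      intro k mm i aa
      rw [hG]
      rcases eq_or_ne k mm with h1 | h1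
      · subst h1
        have : ¬((k:ℕ) = (k:ℕ)+1) := by omega
        simp [this]
      · simp [h1]
    have step1 : (Gᵀ * Qd * G) (m,a) (l,b)
        = ∑ k : Fin N, ∑ i : Fin n, ∑ j : Fin n,
            G (k,i) (m,a) * (Q (k:ℕ))⁻¹ i j * G (k,j) (l,b) := by
      simp only [Matrix.mul_apply, Matrix.transpose_apply, hQd, Fintype.sum_prod_type,
        ite_mul, mul_ite, zero_mul, mul_zero, Finset.sum_ite_eq, Finset.sum_ite_eq',
        Finset.mem_univ, if_true, Finset.sum_mul, Finset.mul_sum, Finset.sum_ite_irrel,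
        Finset.sum_const_zero]
      exact Finset.sum_congr rfl fun k _ => Finset.sum_comm
    rw [step1]
    simp only [hGsplit]
    have expand : ∀ (k : Fin N) (i j : Fin n),
        ((if k = m then (if i = a then (1:ℝ) else 0) else 0)
          + (if (k:ℕ) = (m:ℕ)+1 then -(g' (k:ℕ) i a) else 0))
        * (Q (k:ℕ))⁻¹ i j *
        ((if k = l then (if j = b then (1:ℝ) else 0) else 0)
          + (if (k:ℕ) = (l:ℕ)+1 then -(g' (k:ℕ) j b) else 0))
        =
        (if k = m then (if i = a then (1:ℝ) else 0) else 0) * (Q (k:ℕ))⁻¹ i j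
          * (if k = l then (if j = b then (1:ℝ) else 0) else 0)
        + (if k = m then (if i = a then (1:ℝ) else 0) else 0) * (Q (k:ℕ))⁻¹ i j
          * (if (k:ℕ) = (l:ℕ)+1 then -(g' (k:ℕ) j b) else 0)
        + (if (k:ℕ) = (m:ℕ)+1 then -(g' (k:ℕ) i a) else 0) * (Q (k:ℕ))⁻¹ i j
          * (if k = l then (if j = b then (1:ℝ) else 0) else 0)
        + (if (k:ℕ) = (m:ℕ)+1 then -(g' (k:ℕ) i a) else 0) * (Q (k:ℕ))⁻¹ i j
          * (if (k:ℕ) = (l:ℕ)+1 then -(g' (k:ℕ) j b) else 0) := by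
      intro k i j; ring
    simp only [expand, Finset.sum_add_distrib]
    have T1 : (∑ x : Fin N, ∑ x1 : Fin n, ∑ x2 : Fin n,
        (if x = m then if x1 = a then (1:ℝ) else 0 else 0) * (Q ↑x)⁻¹ x1 x2 *
          if x = l then if x2 = b then 1 else 0 else 0)
        = if m = l then (Q (m:ℕ))⁻¹ a b else 0 := by
      simp only [ite_mul, mul_ite, one_mul, zero_mul, mul_zero, mul_one,
        Finset.sum_ite_irrel, Finset.sum_const_zero, Finset.sum_ite_eq, Finset.sum_ite_eq',
        Finset.mem_univ, if_true]
      rcases eq_or_ne m l with h | h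
      · subst h; simp
      · simp [h, Ne.symm h]
    have T2 : (∑ x : Fin N, ∑ x1 : Fin n, ∑ x2 : Fin n,
        (if x = m then if x1 = a then (1:ℝ) else 0 else 0) * (Q ↑x)⁻¹ x1 x2 *
          if (x:ℕ) = (l:ℕ) + 1 then -g' (↑x) x2 b else 0)
        = if (m:ℕ) = (l:ℕ)+1 then (-((Q (m:ℕ))⁻¹ * g' (m:ℕ))) a b else 0 := by
      simp only [ite_mul, mul_ite, one_mul, zero_mul, mul_zero, mul_one,
        Finset.sum_ite_irrel, Finset.sum_const_zero, Finset.sum_ite_eq, Finset.sum_ite_eq',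
        Finset.mem_univ, if_true, Matrix.neg_apply, Matrix.mul_apply, mul_neg,
        Finset.sum_neg_distrib, neg_apply]
      exact lemB _ m _
    have T3 : (∑ x : Fin N, ∑ x1 : Fin n, ∑ x2 : Fin n,
        (if (x:ℕ) = (m:ℕ) + 1 then -g' (↑x) x1 a else 0) * (Q ↑x)⁻¹ x1 x2 *
          if x = l then if x2 = b then (1:ℝ) else 0 else 0)
        = if (l:ℕ) = (m:ℕ)+1 then (-((g' (l:ℕ))ᵀ * (Q (l:ℕ))⁻¹)) a b else 0 := by
      simp only [ite_mul, mul_ite, one_mul, zero_mul, mul_zero, mul_one, neg_mul,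
        Finset.sum_ite_irrel, Finset.sum_const_zero, Finset.sum_ite_eq, Finset.sum_ite_eq',
        Finset.mem_univ, if_true, Matrix.neg_apply, Matrix.mul_apply, mul_neg, neg_neg,
        Finset.sum_neg_distrib, neg_apply, Matrix.transpose_apply]
    have T4 : (∑ x : Fin N, ∑ x1 : Fin n, ∑ x2 : Fin n,
        (if (x:ℕ) = (m:ℕ) + 1 then -g' (↑x) x1 a else 0) * (Q ↑x)⁻¹ x1 x2 *
          if (x:ℕ) = (l:ℕ) + 1 then -g' (↑x) x2 b else 0)
        = if m = l then ((g' ((m:ℕ)+1))ᵀ * (Q ((m:ℕ)+1))⁻¹ * g' ((m:ℕ)+1)) a b else 0 := by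
      rcases eq_or_ne m l with hml | hml
      · subst hml
        rw [if_pos rfl]
        have h1 : ∀ x : Fin N,
            (∑ x1 : Fin n, ∑ x2 : Fin n,
              (if (x:ℕ) = (m:ℕ) + 1 then -g' (↑x) x1 a else 0) * (Q ↑x)⁻¹ x1 x2 *
                if (x:ℕ) = (m:ℕ) + 1 then -g' (↑x) x2 b else 0)
            = if (x:ℕ) = (m:ℕ)+1 then
                (fun c => ((g' c)ᵀ * (Q c)⁻¹ * g' c) a b) ((x:ℕ)) else 0 := by
          intro x
          by_cases hx : (x:ℕ) = (m:ℕ)+1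
          · simp only [if_pos hx, Matrix.mul_apply, Matrix.transpose_apply, Finset.sum_mul]
            rw [Finset.sum_comm]
            refine Finset.sum_congr rfl fun i _ => Finset.sum_congr rfl fun j _ => by ring
          · simp [hx]
        have h2 : ∀ x : Fin N, (if (x:ℕ) = (m:ℕ)+1 then
                (fun c => ((g' c)ᵀ * (Q c)⁻¹ * g' c) a b) ((x:ℕ)) else 0)
            = (if (x:ℕ) = (m:ℕ)+1 then
                (fun c => ((g' c)ᵀ * (Q c)⁻¹ * g' c) a b) ((m:ℕ)+1) else 0) := by
          intro x; by_cases hx : (x:ℕ) = (m:ℕ)+1 <;> simp [hx]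
        exact (Finset.sum_congr rfl fun x _ => (h1 x).trans (h2 x)).trans
          (lemA ((m:ℕ)+1) (by omega) (fun c => ((g' c)ᵀ * (Q c)⁻¹ * g' c) a b)
            (by simp [hg'N]))
      · rw [if_neg hml, Finset.sum_eq_zero]
        intro x _
        rcases eq_or_ne ((x:ℕ)) ((m:ℕ)+1) with h1 | h1
        · have h2 : ¬((x:ℕ) = (l:ℕ)+1) := by
            intro h2; exact hml (Fin.ext (by omega))
          simp [h2]
        · simp [h1]
    rw [T1, T2, T3, T4]
    rcases eq_or_ne m l with h | h
    · subst h
      have h1 : ¬((m:ℕ) = (m:ℕ)+1) := by omega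
      simp [h1, Matrix.add_apply]
      ring
    · have h0 : ¬(m = l) := h
      rcases eq_or_ne ((m:ℕ)) ((l:ℕ)+1) with h1 | h1
      · have h2 : ¬((l:ℕ) = (m:ℕ)+1) := by omega
        simp [h0, h1, h2, show ¬((l:ℕ) = (l:ℕ)+1+1) from by omega]
      · simp [h0, h1]
  have key : C = Gᵀ * Qd * G + Hd := by
    apply Matrix.ext
    rintro ⟨m, a⟩ ⟨l, b⟩
    rw [Matrix.add_apply, hmain m l a b, hHd, hC]
    rcases eq_or_ne m l with h | h
    · subst h
      simp [Matrix.add_apply]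
    · simp [h]
  refine ⟨key, ?_⟩
  -- Qd is positive definite
  have hQinv : ∀ k : Fin N, ((Q (k:ℕ))⁻¹).PosDef := fun k => (hQ _ (le_of_lt k.2)).inv
  have hQdP : Qd.PosDef := by
    rw [Matrix.posDef_iff_dotProduct_mulVec]
    constructor
    · show Qdᴴ = Qd
      apply Matrix.ext
      rintro ⟨k, i⟩ ⟨s, j⟩
      rw [Matrix.conjTranspose_apply, hQd, hQd]
      rcases eq_or_ne k s with h | h
      · subst h
        simp only [if_pos rfl]
        rw [star_trivial]
        exact congrFun (congrFun (hQinv k).isHermitian.symm i) j ▸ rfl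
      · simp [h, Ne.symm h]
    · intro x hx
      have hexp : star x ⬝ᵥ (Qd *ᵥ x)
          = ∑ k : Fin N, star (fun i => x (k, i)) ⬝ᵥ ((Q (k:ℕ))⁻¹ *ᵥ fun j => x (k, j)) := by
        simp only [dotProduct, Matrix.mulVec, hQd, Fintype.sum_prod_type, dotProduct,
          ite_mul, mul_ite, zero_mul, mul_zero, Finset.sum_ite_irrel, Finset.sum_const_zero,
          Finset.sum_ite_eq, Finset.sum_ite_eq', Finset.mem_univ, if_true, Finset.mul_sum, Pi.star_apply, star_trivial]
      rw [hexp]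
      obtain ⟨p, hp⟩ : ∃ p, x p ≠ 0 := by
        by_contra hc; push_neg at hc; exact hx (funext hc)
      refine Finset.sum_pos' (fun k _ => ?_) ⟨p.1, Finset.mem_univ _, ?_⟩
      · exact (Matrix.posSemidef_iff_dotProduct_mulVec.mp (hQinv k).posSemidef).2 _
      · refine (Matrix.posDef_iff_dotProduct_mulVec.mp (hQinv p.1)).2 ?_
        intro h0
        exact hp (congrFun h0 p.2)
  -- Hd is positive semidefinite
  have hHdP : Hd.PosSemidef := by
    rw [Matrix.posSemidef_iff_dotProduct_mulVec]
    constructor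
    · show Hdᴴ = Hd
      apply Matrix.ext
      rintro ⟨k, i⟩ ⟨s, j⟩
      rw [Matrix.conjTranspose_apply, hHd, hHd]
      rcases eq_or_ne k s with h | h
      · subst h
        simp only [if_pos rfl]
        rw [star_trivial]
        exact congrFun (congrFun (hH k).isHermitian.symm i) j ▸ rfl
      · simp [h, Ne.symm h]
    · intro x
      have hexp : star x ⬝ᵥ (Hd *ᵥ x)
          = ∑ k : Fin N, star (fun i => x (k, i)) ⬝ᵥ ((H k) *ᵥ fun j => x (k, j)) := by
        simp only [dotProduct, Matrix.mulVec, hHd, Fintype.sum_prod_type, dotProduct,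
          ite_mul, mul_ite, zero_mul, mul_zero, Finset.sum_ite_irrel, Finset.sum_const_zero,
          Finset.sum_ite_eq, Finset.sum_ite_eq', Finset.mem_univ, if_true, Finset.mul_sum, Pi.star_apply, star_trivial]
      rw [hexp]
      exact Finset.sum_nonneg fun k _ => (Matrix.posSemidef_iff_dotProduct_mulVec.mp (hH k)).2 _
  -- G is injective on vectors
  have Ginj : ∀ x : Fin N × Fin n → ℝ, G *ᵥ x = 0 → x = 0 := by
    intro x hx
    have main : ∀ kk : ℕ, ∀ k : Fin N, (k:ℕ) = kk → ∀ i : Fin n, x (k, i) = 0 := by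
      intro kk
      induction kk using Nat.strong_induction_on with
      | _ kk ih =>
        intro k hk i
        have hzero : (G *ᵥ x) (k, i) = 0 := congrFun hx (k, i)
        have hcomp : (G *ᵥ x) (k, i) = x (k, i) := by
          show (∑ q : Fin N × Fin n, G (k, i) q * x q) = x (k, i)
          rw [Fintype.sum_prod_type]
          have hinner : ∀ s : Fin N,
              (∑ j : Fin n, G (k, i) (s, j) * x (s, j))
                = if s = k then x (k, i) else 0 := by
            intro s
            rcases eq_or_ne k s with hs | hs
            · subst hs
              simp [hG, Finset.sum_ite_eq', ite_mul]
            · rw [if_neg (Ne.symm hs), Finset.sum_eq_zero]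
              intro j _
              rw [hG]
              simp only [hs, if_false]
              rcases eq_or_ne ((k:ℕ)) ((s:ℕ)+1) with h1 | h1
              · have hsk : (s:ℕ) < kk := by omega
                rw [ih (s:ℕ) hsk s rfl j, mul_zero]
              · simp [h1]
          simp [hinner]
        rw [← hcomp, hzero]
    funext p
    exact main (p.1 : ℕ) p.1 rfl p.2
  -- conclude
  have hGH : Gᴴ = Gᵀ := Matrix.conjTranspose_eq_transpose_of_trivial G
  have h1 : (Gᵀ * Qd * G).PosDef := by
    rw [Matrix.posDef_iff_dotProduct_mulVec]
    constructor
    · rw [← hGH]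
      exact Matrix.isHermitian_conjTranspose_mul_mul G hQdP.1
    · intro x hx
      have hsx : star x = x := funext fun p => star_trivial _
      have hform : star x ⬝ᵥ ((Gᵀ * Qd * G) *ᵥ x)
          = star (G *ᵥ x) ⬝ᵥ (Qd *ᵥ (G *ᵥ x)) := by
        have hsy : star (G *ᵥ x) = G *ᵥ x := funext fun p => star_trivial _
        rw [hsx, hsy]
        rw [← Matrix.mulVec_mulVec, ← Matrix.mulVec_mulVec, Matrix.dotProduct_mulVec,
          Matrix.vecMul_transpose]
      rw [hform]
      exact (Matrix.posDef_iff_dotProduct_mulVec.mp hQdP).2 fun h0 => hx (Ginj x h0)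
  rw [key]
  exact h1.add_posSemidef hHdP
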